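/- Let X be a paracompact topological space, Y a Banach space, and φ : X → Set Y a lower semicontinuous set-valued map such that each φ(x) is nonempty, closed, and convex. Then φ admits a continuous single-valued selection, i.e., there exists a continuous f : X → Y with f(x) ∈ φ(x) for all x. -/

import Mathlib

open Set Filter Topology Function

/-- Existence of a sequence built by recursion with choice. -/
lemma michael_exists_seq {α : Type*} (P : ℕ → α → Prop) (Q : ℕ → α → α → Prop)
    (h0 : ∃ a, P 0 a) (hstep : ∀ n a, P n a → ∃ b, P (n + 1) b ∧ Q n a b) :
    ∃ f : ℕ → α, (∀ n, P n (f n)) ∧ ∀ n, Q n (f n) (f (n + 1)) := by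
  let g : (n : ℕ) → {a // P n a} := fun n =>
    Nat.rec ⟨h0.choose, h0.choose_spec⟩
      (fun n p => ⟨(hstep n p.1 p.2).choose, (hstep n p.1 p.2).choose_spec.1⟩) n
  exact ⟨fun n => (g n).1, fun n => (g n).2,
    fun n => (hstep n (g n).1 (g n).2).choose_spec.2⟩

/-- Approximate selection: an LSC convex-valued map with nonempty values admits,
for every `ε > 0`, a continuous `ε`-approximate selection. -/
lemma michael_approx_selection
    {X : Type*} [TopologicalSpace X] [ParacompactSpace X] [T2Space X]
    {Y : Type*} [NormedAddCommGroup Y] [NormedSpace ℝ Y]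
    (φ : X → Set Y)
    (hlsc : ∀ U : Set Y, IsOpen U → IsOpen {x | (φ x ∩ U).Nonempty})
    (hne : ∀ x, (φ x).Nonempty)
    (hcv : ∀ x, Convex ℝ (φ x))
    {ε : ℝ} (hε : 0 < ε) :
    ∃ f : X → Y, Continuous f ∧ ∀ x, ∃ z ∈ φ x, ‖f x - z‖ < ε := by
  classical
  set U : Y → Set X := fun y => {x | (φ x ∩ Metric.ball y ε).Nonempty} with hU
  have hUo : ∀ y, IsOpen (U y) := fun y => hlsc _ Metric.isOpen_ball
  have hUc : (univ : Set X) ⊆ ⋃ y, U y := by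
    intro x _
    obtain ⟨y, hy⟩ := hne x
    exact mem_iUnion.2 ⟨y, ⟨y, hy, Metric.mem_ball_self hε⟩⟩
  obtain ⟨p, hp⟩ := PartitionOfUnity.exists_isSubordinate isClosed_univ U hUo hUc
  refine ⟨fun x => ∑ᶠ y, p y x • y,
    p.continuous_finsum_smul (g := fun i _ => i) (fun i x _ => continuousAt_const), ?_⟩
  intro x
  set s : Finset Y := p.finsupport x with hs
  have hsum1 : ∑ i ∈ s, p i x = 1 := p.sum_finsupport (mem_univ x)
  have hfx : ∑ᶠ y, p y x • y = ∑ i ∈ s, p i x • i :=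
    (p.sum_finsupport_smul_eq_finsum (fun i _ => i)).symm
  have hpos : ∀ i ∈ s, 0 < p i x := by
    intro i hi
    have hne0 : p i x ≠ 0 := by
      have := (p.mem_finsupport x).1 hi
      simpa [Function.mem_support] using this
    exact lt_of_le_of_ne (p.nonneg i x) (Ne.symm hne0)
  have hmem : ∀ i ∈ s, (φ x ∩ Metric.ball i ε).Nonempty := by
    intro i hi
    have hx' : x ∈ tsupport (p i) := subset_closure ((p.mem_finsupport x).1 hi)
    exact hp i hx'
  have hz : ∀ i : Y, ∃ z, i ∈ s → z ∈ φ x ∧ ‖i - z‖ < ε := by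
    intro i
    by_cases hi : i ∈ s
    · obtain ⟨z, hz1, hz2⟩ := hmem i hi
      refine ⟨z, fun _ => ⟨hz1, ?_⟩⟩
      rw [Metric.mem_ball, dist_eq_norm] at hz2
      rwa [norm_sub_rev]
    · exact ⟨(hne x).choose, fun h => absurd h hi⟩
  choose z hzspec using hz
  have hsne : s.Nonempty := by
    rcases Finset.eq_empty_or_nonempty s with h | h
    · exfalso; rw [h] at hsum1; simp at hsum1
    · exact h
  refine ⟨∑ i ∈ s, p i x • z i, ?_, ?_⟩
  · exact (hcv x).sum_mem (fun i _ => p.nonneg i x) hsum1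
      (fun i hi => (hzspec i hi).1)
  · show ‖(∑ᶠ y, p y x • y) - ∑ i ∈ s, p i x • z i‖ < ε
    rw [hfx, ← Finset.sum_sub_distrib]
    have h1 : ∀ i ∈ s, p i x • i - p i x • z i = p i x • (i - z i) := by
      intro i _; rw [smul_sub]
    rw [Finset.sum_congr rfl h1]
    calc ‖∑ i ∈ s, p i x • (i - z i)‖
        ≤ ∑ i ∈ s, ‖p i x • (i - z i)‖ := norm_sum_le _ _
      _ = ∑ i ∈ s, p i x * ‖i - z i‖ := by
          refine Finset.sum_congr rfl fun i hi => ?_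
          rw [norm_smul, Real.norm_of_nonneg (p.nonneg i x)]
      _ < ∑ i ∈ s, p i x * ε := by
          refine Finset.sum_lt_sum_of_nonempty hsne fun i hi => ?_
          exact mul_lt_mul_of_pos_left (hzspec i hi).2 (hpos i hi)
      _ = ε := by rw [← Finset.sum_mul, hsum1, one_mul]

/-- If `φ` is LSC and `f` is continuous, then `x ↦ φ x ∩ ball (f x) r` is LSC. -/
lemma michael_lsc_inter_ball
    {X : Type*} [TopologicalSpace X]
    {Y : Type*} [NormedAddCommGroup Y]
    (φ : X → Set Y)
    (hlsc : ∀ U : Set Y, IsOpen U → IsOpen {x | (φ x ∩ U).Nonempty})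
    {f : X → Y} (hf : Continuous f) (r : ℝ) :
    ∀ U : Set Y, IsOpen U →
      IsOpen {x | ((fun x => φ x ∩ Metric.ball (f x) r) x ∩ U).Nonempty} := by
  intro U hUo
  rw [isOpen_iff_mem_nhds]
  rintro x₀ ⟨w, ⟨hwφ, hwb⟩, hwU⟩
  rw [Metric.mem_ball] at hwb
  obtain ⟨δ₁, hδ₁, hballU⟩ := Metric.isOpen_iff.1 hUo w hwU
  set δ : ℝ := min δ₁ ((r - dist w (f x₀)) / 2) with hδdef
  have hδpos : 0 < δ := lt_min hδ₁ (by linarith)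
  have hδle : δ ≤ (r - dist w (f x₀)) / 2 := min_le_right _ _
  have hδ₁le : δ ≤ δ₁ := min_le_left _ _
  have hopen : IsOpen ({x | (φ x ∩ Metric.ball w δ).Nonempty} ∩
      f ⁻¹' Metric.ball (f x₀) δ) :=
    (hlsc _ Metric.isOpen_ball).inter (Metric.isOpen_ball.preimage hf)
  have hx₀mem : x₀ ∈ {x | (φ x ∩ Metric.ball w δ).Nonempty} ∩
      f ⁻¹' Metric.ball (f x₀) δ :=
    ⟨⟨w, hwφ, Metric.mem_ball_self hδpos⟩, Metric.mem_ball_self hδpos⟩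
  refine Filter.mem_of_superset (hopen.mem_nhds hx₀mem) ?_
  rintro x ⟨⟨v, hvφ, hvb⟩, hxf⟩
  rw [Metric.mem_ball] at hvb
  rw [mem_preimage, Metric.mem_ball] at hxf
  refine ⟨v, ⟨hvφ, ?_⟩, hballU (by rw [Metric.mem_ball]; exact lt_of_lt_of_le hvb hδ₁le)⟩
  rw [Metric.mem_ball]
  calc dist v (f x) ≤ dist v w + dist w (f x₀) + dist (f x₀) (f x) :=
        dist_triangle4 v w (f x₀) (f x)
    _ < δ + dist w (f x₀) + δ := by
        have : dist (f x₀) (f x) < δ := by rwa [dist_comm]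
        linarith
    _ ≤ r := by linarith

/-- Michael's convex-valued selection theorem: an LSC map from a paracompact
space to a Banach space with nonempty closed convex values admits a continuous
selection. -/
theorem michael_convex_valued_selection
    {X : Type*} [TopologicalSpace X] [ParacompactSpace X] [T2Space X]
    {Y : Type*} [NormedAddCommGroup Y] [NormedSpace ℝ Y] [CompleteSpace Y]
    (φ : X → Set Y)
    (hlsc : ∀ U : Set Y, IsOpen U → IsOpen {x | (φ x ∩ U).Nonempty})
    (hne : ∀ x, (φ x).Nonempty)
    (hcl : ∀ x, IsClosed (φ x))
    (hcv : ∀ x, Convex ℝ (φ x)) :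
    ∃ f : X → Y, Continuous f ∧ ∀ x, f x ∈ φ x := by
  classical
  set ε : ℕ → ℝ := fun n => (1 / 2 : ℝ) ^ n with hε
  have hεpos : ∀ n, 0 < ε n := fun n => pow_pos (by norm_num) n
  set P : ℕ → (X → Y) → Prop :=
    fun n g => Continuous g ∧ ∀ x, ∃ z ∈ φ x, ‖g x - z‖ < ε n with hP
  set Q : ℕ → (X → Y) → (X → Y) → Prop :=
    fun n g g' => ∀ x, dist (g x) (g' x) ≤ 2 * ε n with hQ
  have h0 : ∃ g, P 0 g := by
    obtain ⟨g, hg1, hg2⟩ := michael_approx_selection φ hlsc hne hcv (hεpos 0)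
    exact ⟨g, hg1, hg2⟩
  have hstep : ∀ n g, P n g → ∃ g', P (n + 1) g' ∧ Q n g g' := by
    rintro n g ⟨hgc, hgs⟩
    set ψ : X → Set Y := fun x => φ x ∩ Metric.ball (g x) (ε n) with hψ
    have hψlsc : ∀ U : Set Y, IsOpen U → IsOpen {x | (ψ x ∩ U).Nonempty} :=
      michael_lsc_inter_ball φ hlsc hgc (ε n)
    have hψne : ∀ x, (ψ x).Nonempty := by
      intro x
      obtain ⟨z, hz1, hz2⟩ := hgs x
      exact ⟨z, hz1, by rw [Metric.mem_ball, dist_eq_norm, norm_sub_rev]; exact hz2⟩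
    have hψcv : ∀ x, Convex ℝ (ψ x) := fun x =>
      (hcv x).inter (convex_ball (g x) (ε n))
    obtain ⟨g', hg'c, hg's⟩ :=
      michael_approx_selection ψ hψlsc hψne hψcv (hεpos (n + 1))
    refine ⟨g', ⟨hg'c, fun x => ?_⟩, fun x => ?_⟩
    · obtain ⟨z, hz1, hz2⟩ := hg's x
      exact ⟨z, hz1.1, hz2⟩
    · obtain ⟨z, ⟨hzφ, hzb⟩, hz2⟩ := hg's x
      rw [Metric.mem_ball] at hzb
      have h1 : dist (g' x) z < ε (n + 1) := by rw [dist_eq_norm]; exact hz2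
      have hε' : ε (n + 1) ≤ ε n := by
        apply pow_le_pow_of_le_one (by norm_num) (by norm_num)
        omega
      calc dist (g x) (g' x) ≤ dist (g x) z + dist z (g' x) := dist_triangle _ _ _
        _ = dist z (g x) + dist (g' x) z := by rw [dist_comm (g x) z, dist_comm z (g' x)]
        _ ≤ ε n + ε (n + 1) := add_le_add hzb.le h1.le
        _ ≤ 2 * ε n := by linarith
  obtain ⟨f, hfP, hfQ⟩ := michael_exists_seq P Q h0 hstep
  -- Each pointwise sequence is Cauchy with geometric bound
  have hdist : ∀ x n, dist (f n x) (f (n + 1) x) ≤ 2 * (1 / 2 : ℝ) ^ n :=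
    fun x n => hfQ n x
  have hcauchy : ∀ x, CauchySeq fun n => f n x := fun x =>
    cauchySeq_of_le_geometric (1 / 2) 2 (by norm_num) (hdist x)
  have hlim : ∀ x, ∃ l, Tendsto (fun n => f n x) atTop (𝓝 l) := fun x =>
    cauchySeq_tendsto_of_complete (hcauchy x)
  choose F hF using hlim
  have hFdist : ∀ x n, dist (f n x) (F x) ≤ 2 * (1 / 2 : ℝ) ^ n / (1 - 1 / 2) :=
    fun x n => dist_le_of_le_geometric_of_tendsto (1 / 2) 2 (by norm_num)
      (hdist x) (hF x) n
  have hFdist' : ∀ x n, dist (f n x) (F x) ≤ 4 * (1 / 2 : ℝ) ^ n := by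
    intro x n
    have := hFdist x n
    calc dist (f n x) (F x) ≤ 2 * (1 / 2 : ℝ) ^ n / (1 - 1 / 2) := this
      _ = 4 * (1 / 2 : ℝ) ^ n := by ring
  have hgeo : Tendsto (fun n : ℕ => 4 * (1 / 2 : ℝ) ^ n) atTop (𝓝 0) := by
    have h := tendsto_pow_atTop_nhds_zero_of_lt_one
      (by norm_num : (0 : ℝ) ≤ 1 / 2) (by norm_num : (1 / 2 : ℝ) < 1)
    simpa using h.const_mul 4
  have hunif : TendstoUniformly (fun n x => f n x) F atTop := by
    rw [Metric.tendstoUniformly_iff]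
    intro δ hδ
    have : ∀ᶠ n in atTop, 4 * (1 / 2 : ℝ) ^ n < δ :=
      (hgeo.eventually (gt_mem_nhds hδ))
    filter_upwards [this] with n hn x
    rw [dist_comm]
    exact lt_of_le_of_lt (hFdist' x n) hn
  refine ⟨F, hunif.continuous (Eventually.of_forall fun n => (hfP n).1).frequently, fun x => ?_⟩
  -- membership: F x ∈ closure (φ x) = φ x
  rw [← (hcl x).closure_eq]
  rw [Metric.mem_closure_iff]
  intro δ hδ
  have : ∀ᶠ n in atTop, 4 * (1 / 2 : ℝ) ^ n + (1 / 2 : ℝ) ^ n < δ := by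
    have h5 : Tendsto (fun n : ℕ => 4 * (1 / 2 : ℝ) ^ n + (1 / 2 : ℝ) ^ n) atTop (𝓝 0) := by
      have h := tendsto_pow_atTop_nhds_zero_of_lt_one
        (by norm_num : (0 : ℝ) ≤ 1 / 2) (by norm_num : (1 / 2 : ℝ) < 1)
      simpa using hgeo.add h
    exact h5.eventually (gt_mem_nhds hδ)
  obtain ⟨n, hn⟩ := this.exists
  obtain ⟨z, hz1, hz2⟩ := (hfP n).2 x
  refine ⟨z, hz1, ?_⟩
  calc dist (F x) z ≤ dist (F x) (f n x) + dist (f n x) z := dist_triangle _ _ _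
    _ ≤ 4 * (1 / 2 : ℝ) ^ n + (1 / 2 : ℝ) ^ n := by
        refine add_le_add ?_ ?_
        · rw [dist_comm]; exact hFdist' x n
        · rw [dist_eq_norm]; exact hz2.le
    _ < δ := hn
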